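/- Let m ≥ 2 be even, let V be a set of m elements, and let M be a perfect matching on V, i.e. a partition of V into m/2 unordered pairs. Then the collection of all unordered pairs of distinct elements of V that do not belong to M can be partitioned into m−2 perfect matchings on V. -/

import Mathlib

open Finset

/-- A hierarchical clustering tree: a rooted binary tree with leaves labelled by vertices. -/
inductive HC (V : Type*) where
  | leaf : V → HC V
  | node : HC V → HC V → HC V

namespace HC

variable {V : Type*}

/-- The list of leaf labels of a tree, left to right. -/
def leafList : HC V → List V
  | .leaf v => [v]
  | .node l r => leafList l ++ leafList r

/-- The set of leaf labels of a tree. -/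
def leaves [DecidableEq V] (t : HC V) : Finset V :=
  t.leafList.toFinset

/-- `t.cluster i j` is the leaf set of the subtree of `t` rooted at the least common
ancestor of the leaves `i` and `j` (i.e. `leaves(T[i ∨ j])`). -/
def cluster [DecidableEq V] : HC V → V → V → Finset V
  | .leaf v, _, _ => {v}
  | .node l r, i, j =>
    if i ∈ l.leaves ∧ j ∈ l.leaves then l.cluster i j
    else if i ∈ r.leaves ∧ j ∈ r.leaves then r.cluster i j
    else (HC.node l r).leaves

/-- `t` is a hierarchical clustering tree on the whole vertex type `V`:
its leaves are in bijection with `V`. -/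
def IsTreeOn [Fintype V] [DecidableEq V] (t : HC V) : Prop :=
  t.leafList.Nodup ∧ t.leaves = Finset.univ

/-- Sum of `f A B` over all internal nodes of the tree, where `A`, `B` are the
leaf sets of the two children of the internal node. -/
def internalSum [DecidableEq V] (f : Finset V → Finset V → ℝ) : HC V → ℝ
  | .leaf _ => 0
  | .node l r => f l.leaves r.leaves + internalSum f l + internalSum f r

/-- The list of all subtrees of a tree. -/
def subtreesList : HC V → List (HC V)
  | .leaf v => [.leaf v]
  | .node l r => .node l r :: (subtreesList l ++ subtreesList r)

/-- Dasgupta's cost: sum over unordered pairs `{i,j}` of distinct vertices of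
`w i j * |leaves(T[i ∨ j])|`. -/
noncomputable def cost [Fintype V] [DecidableEq V] (w : V → V → ℝ) (t : HC V) : ℝ :=
  (1 / 2) * ∑ p ∈ Finset.univ.offDiag, w p.1 p.2 * ((t.cluster p.1 p.2).card : ℝ)

/-- Moseley–Wang revenue: sum over unordered pairs `{i,j}` of distinct vertices of
`w i j * |nonleaves(T[i ∨ j])|`. -/
noncomputable def rev [Fintype V] [DecidableEq V] (w : V → V → ℝ) (t : HC V) : ℝ :=
  (1 / 2) * ∑ p ∈ Finset.univ.offDiag,
    w p.1 p.2 * ((Finset.univ \ t.cluster p.1 p.2).card : ℝ)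

/-- Cohen-Addad et al.'s value: the same formula as cost, used for dissimilarity weights. -/
noncomputable def val [Fintype V] [DecidableEq V] (w : V → V → ℝ) (t : HC V) : ℝ :=
  cost w t

end HC

/-- The total weight `W`: the sum of `w i j` over unordered pairs of distinct vertices. -/
noncomputable def totalWeight {V : Type*} [Fintype V] [DecidableEq V] (w : V → V → ℝ) : ℝ :=
  (1 / 2) * ∑ p ∈ Finset.univ.offDiag, w p.1 p.2

/-- The merge cost of merging disjoint clusters `A` and `B`. -/
noncomputable def mergeCost {V : Type*} [Fintype V] [DecidableEq V] (w : V → V → ℝ) (A B : Finset V) : ℝ :=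
  (B.card : ℝ) * ∑ a ∈ A, ∑ c ∈ Finset.univ \ (A ∪ B), w a c
    + (A.card : ℝ) * ∑ b ∈ B, ∑ c ∈ Finset.univ \ (A ∪ B), w b c

/-- The merge revenue of merging disjoint clusters `A` and `B`. -/
noncomputable def mergeRev {V : Type*} [Fintype V] (w : V → V → ℝ) (A B : Finset V) : ℝ :=
  ((Fintype.card V : ℝ) - (A.card : ℝ) - (B.card : ℝ)) * ∑ a ∈ A, ∑ b ∈ B, w a b

/-- The average linkage between disjoint nonempty clusters `A` and `B`. -/
noncomputable def avgLinkage {V : Type*} (w : V → V → ℝ) (A B : Finset V) : ℝ :=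
  (1 / ((A.card : ℝ) * (B.card : ℝ))) * ∑ a ∈ A, ∑ b ∈ B, w a b

/-- A matching encoded as an involution `f : V → V`: the matched pairs are the pairs
`{v, f v}` with `f v ≠ v`; its weight is the sum of weights of matched pairs. -/
noncomputable def matchingWeight {V : Type*} [Fintype V] [DecidableEq V] (w : V → V → ℝ) (f : V → V) : ℝ :=
  (1 / 2) * ∑ v ∈ Finset.univ.filter (fun v => f v ≠ v), w v (f v)

/-- A perfect matching encoded as a fixed-point-free involution. -/
def IsPerfectMatching {V : Type*} (f : V → V) : Prop :=
  (∀ v, f (f v) = v) ∧ ∀ v, f v ≠ v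



/-- For even `m ≥ 2`, a set `V` of `m` elements, and a perfect matching `M` on `V`
(encoded by the fixed-point-free involution `σ`), the unordered pairs of distinct elements
not belonging to `M` can be partitioned into `m − 2` perfect matchings on `V`
(encoded by fixed-point-free involutions `F t`, with every non-`M` pair covered by
exactly one of them and no `M` pair covered). -/
lemma cycleType_ffp_inv {V : Type*} [Fintype V] [DecidableEq V] [Nonempty V] (σ : Equiv.Perm V)
    (h2 : σ * σ = 1) (hff : ∀ v, σ v ≠ v) :
    σ.cycleType = Multiset.replicate (Fintype.card V / 2) 2 := by
  have hsupp : σ.support = Finset.univ := by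
    ext v; simp [Equiv.Perm.mem_support, hff v]
  have hσ1 : σ ≠ 1 := by
    intro h; exact hff (Classical.arbitrary V) (by simp [h])
  have hord : orderOf σ = 2 := orderOf_eq_prime (by rw [pow_two]; exact h2) hσ1
  have hall : ∀ n ∈ σ.cycleType, n = 2 := by
    intro n hn
    have h1 : n ∣ 2 := by
      rw [← hord, ← Equiv.Perm.lcm_cycleType]; exact Multiset.dvd_lcm hn
    have h2' := Equiv.Perm.two_le_of_mem_cycleType hn
    exact Nat.le_antisymm (Nat.le_of_dvd two_pos h1) h2'
  have hsum : σ.cycleType.sum = Fintype.card V := by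
    rw [Equiv.Perm.sum_cycleType, hsupp, Finset.card_univ]
  refine Multiset.eq_replicate.2 ⟨?_, hall⟩
  have : σ.cycleType.sum = 2 * Multiset.card σ.cycleType := by
    calc σ.cycleType.sum = (Multiset.replicate (Multiset.card σ.cycleType) 2).sum := by
          congr 1; exact Multiset.eq_replicate.2 ⟨rfl, hall⟩
      _ = 2 * Multiset.card σ.cycleType := by simp [Multiset.sum_replicate, mul_comm]
  omega

/-- Two fixed-point-free involutions on a nonempty finite type are conjugate. -/
lemma conj_ffp_inv {V : Type*} [Fintype V] [DecidableEq V] [Nonempty V]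
    (σ τ : V → V) (hσ : ∀ v, σ (σ v) = v) (hσ' : ∀ v, σ v ≠ v)
    (hτ : ∀ v, τ (τ v) = v) (hτ' : ∀ v, τ v ≠ v) :
    ∃ e : Equiv.Perm V, ∀ v, e (σ v) = τ (e v) := by
  set sp := Function.Involutive.toPerm σ hσ with hspdef
  set tp := Function.Involutive.toPerm τ hτ with htpdef
  have hc : IsConj sp tp := by
    rw [Equiv.Perm.isConj_iff_cycleType_eq]
    rw [cycleType_ffp_inv sp (by ext v; exact hσ v) hσ',
        cycleType_ffp_inv tp (by ext v; exact hτ v) hτ']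
  obtain ⟨c, hc⟩ := hc
  refine ⟨c, fun v => ?_⟩
  have := congrFun (congrArg (fun (g : Equiv.Perm V) => (g : V → V)) hc.eq) v
  exact this

set_option linter.unusedSectionVars false
/-- Round-robin matching `t` on `Option (ZMod n)`. -/
def rr (n : ℕ) (t : ZMod n) : Option (ZMod n) → Option (ZMod n)
  | none => some t
  | some i => if i = t then none else some (2*t - i)

section RR
variable {n : ℕ} [NeZero n]

lemma two_unit (hn : Nat.Coprime 2 n) : IsUnit (2 : ZMod n) := by
  have := (ZMod.isUnit_iff_coprime 2 n).2 hn
  simpa using this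

lemma two_cancel (hn : Nat.Coprime 2 n) {x y : ZMod n} (h : 2*x = 2*y) : x = y :=
  (two_unit hn).mul_left_cancel h

lemma rr_invol (t : ZMod n) (v : Option (ZMod n)) : rr n t (rr n t v) = v := by
  match v with
  | none => simp [rr]
  | some i =>
    by_cases h : i = t
    · simp [rr, h]
    · have h2 : ¬ (2*t - i = t) := fun he => h (by linear_combination -he)
      simp only [rr, if_neg h, if_neg h2, Option.some.injEq]; ring

lemma rr_ffp (hn : Nat.Coprime 2 n) (t : ZMod n) (v : Option (ZMod n)) : rr n t v ≠ v := by
  match v with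
  | none => simp [rr]
  | some i =>
    by_cases h : i = t
    · simp [rr, h]
    · simp only [rr, if_neg h, ne_eq, Option.some.injEq]
      intro he; exact h (two_cancel hn (by linear_combination -he))

lemma rr_ne_zero (hn : Nat.Coprime 2 n) {t : ZMod n} (ht : t ≠ 0) (v : Option (ZMod n)) :
    rr n t v ≠ rr n 0 v := by
  match v with
  | none => simpa [rr] using ht
  | some i =>
    by_cases h : i = t
    · subst h
      simp [rr, ht]
    · by_cases h0 : i = 0
      · subst h0
        simp [rr, h]
      · simp only [rr, if_neg h, if_neg h0, ne_eq, Option.some.injEq]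
        intro he; exact ht (two_cancel hn (by linear_combination he))

lemma rr_cover (hn : Nat.Coprime 2 n) {u v : Option (ZMod n)} (huv : u ≠ v)
    (h0 : rr n 0 u ≠ v) :
    ∃! t : ZMod n, t ≠ 0 ∧ rr n t u = v := by
  match u, v with
  | none, none => exact absurd rfl huv
  | none, some j =>
    refine ⟨j, ⟨?_, rfl⟩, ?_⟩
    · intro hj0; exact h0 (by simp [rr, hj0])
    · rintro t ⟨ht0, ht⟩; exact (Option.some.injEq ..▸ ht).symm ▸ rfl
  | some i, none =>
    have hi0 : i ≠ 0 := by intro h; exact h0 (by simp [rr, h])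
    refine ⟨i, ⟨hi0, by simp [rr]⟩, ?_⟩
    rintro t ⟨ht0, ht⟩
    by_cases h : i = t
    · exact h.symm
    · rw [rr, if_neg h] at ht; cases ht
  | some i, some j =>
    have hij : i ≠ j := fun h => huv (h ▸ rfl)
    obtain ⟨c, hc⟩ := (two_unit hn).exists_left_inv
    set t₀ := c * (i + j) with ht₀def
    have h2t₀ : 2 * t₀ = i + j := by rw [ht₀def, ← mul_assoc, mul_comm 2 c, hc, one_mul]
    have hit : i ≠ t₀ := by
      intro h
      exact hij (by rw [← h] at h2t₀; linear_combination h2t₀)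
    refine ⟨t₀, ⟨?_, ?_⟩, ?_⟩
    · intro ht0
      rw [ht0, mul_zero] at h2t₀
      apply h0
      by_cases hi0 : i = 0
      · exact absurd (by rw [hi0] at h2t₀ ⊢; linear_combination h2t₀) hij
      · simp only [rr, if_neg hi0, Option.some.injEq]
        linear_combination h2t₀
    · simp only [rr, if_neg hit, Option.some.injEq]
      linear_combination h2t₀
    · rintro t ⟨ht0, ht⟩
      have h : i ≠ t := by
        intro h; rw [rr, if_pos h] at ht; cases ht
      rw [rr, if_neg h, Option.some.injEq] at ht
      exact two_cancel hn (by rw [h2t₀]; linear_combination ht)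

end RR
set_option linter.unusedSectionVars true

theorem stmt6 {V : Type*} [Fintype V] [DecidableEq V] (m : ℕ) (hm : 2 ≤ m)
    (hm2 : Even m) (hcard : Fintype.card V = m)
    (σ : V → V) (hσ : ∀ v, σ (σ v) = v) (hσ' : ∀ v, σ v ≠ v) :
    ∃ F : Fin (m - 2) → V → V,
      (∀ t v, F t (F t v) = v) ∧ (∀ t v, F t v ≠ v) ∧
      (∀ t v, F t v ≠ σ v) ∧
      (∀ u v : V, u ≠ v → σ u ≠ v → ∃! t, F t u = v) := by
  set n := m - 1 with hn_def
  haveI : NeZero n := ⟨by omega⟩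
  have hnodd : Odd n := by
    rcases hm2 with ⟨k, hk⟩
    exact ⟨k - 1, by omega⟩
  have hcop : Nat.Coprime 2 n := by
    rcases hnodd with ⟨k, hk⟩
    refine (Nat.prime_two.coprime_iff_not_dvd).2 ?_
    rintro ⟨c, hc⟩; omega
  haveI : Nonempty V := Fintype.card_pos_iff.1 (by omega)
  have hcardW : Fintype.card (Option (ZMod n)) = Fintype.card V := by
    rw [Fintype.card_option, ZMod.card, hcard]; omega
  set g : Option (ZMod n) ≃ V := Fintype.equivOfCardEq hcardW with hg
  set τ : V → V := fun v => g (rr n 0 (g.symm v)) with hτdef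
  have hτ : ∀ v, τ (τ v) = v := by
    intro v; simp only [hτdef, Equiv.symm_apply_apply, rr_invol, Equiv.apply_symm_apply]
  have hτ' : ∀ v, τ v ≠ v := by
    intro v h
    have := rr_ffp hcop (0 : ZMod n) (g.symm v)
    apply this
    have := congrArg g.symm h
    simpa [hτdef] using this
  obtain ⟨e', he'⟩ := conj_ffp_inv σ τ hσ hσ' hτ hτ'
  set E : V ≃ Option (ZMod n) := e'.trans g.symm with hE
  have hEσ : ∀ v, E (σ v) = rr n 0 (E v) := by
    intro v
    simp only [hE, Equiv.trans_apply, he' v, hτdef, Equiv.symm_apply_apply]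
  have hsub : Fintype.card {t : ZMod n // t ≠ 0} = m - 2 := by
    have h1 : Fintype.card {t : ZMod n // t ≠ 0}
        = Fintype.card (ZMod n) - Fintype.card {t : ZMod n // t = 0} :=
      Fintype.card_subtype_compl _
    rw [h1, ZMod.card, Fintype.card_subtype_eq (0 : ZMod n)]
    omega
  set idx : Fin (m - 2) ≃ {t : ZMod n // t ≠ 0} :=
    (Fintype.equivFinOfCardEq hsub).symm with hidx
  refine ⟨fun t v => E.symm (rr n (idx t).1 (E v)), ?_, ?_, ?_, ?_⟩
  · intro t v
    simp only [Equiv.apply_symm_apply, rr_invol, Equiv.symm_apply_apply]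
  · intro t v h
    have : rr n (idx t).1 (E v) = E v := by
      have := congrArg E h
      simpa using this
    exact rr_ffp hcop _ _ this
  · intro t v h
    have hσv : σ v = E.symm (rr n 0 (E v)) := by
      rw [← hEσ v, Equiv.symm_apply_apply]
    rw [hσv] at h
    have : rr n (idx t).1 (E v) = rr n 0 (E v) := E.symm.injective h
    exact rr_ne_zero hcop (idx t).2 (E v) this
  · intro u v huv hσuv
    have hEuv : E u ≠ E v := fun h => huv (E.injective h)
    have h0 : rr n 0 (E u) ≠ E v := by
      intro h
      apply hσuv
      have := congrArg E.symm h
      rw [← hEσ u, Equiv.symm_apply_apply, Equiv.symm_apply_apply] at this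
      exact this
    obtain ⟨t', ⟨ht'0, ht'⟩, huniq⟩ := rr_cover hcop hEuv h0
    refine ⟨idx.symm ⟨t', ht'0⟩, ?_, ?_⟩
    · simp only [Equiv.apply_symm_apply]
      rw [ht', Equiv.symm_apply_apply]

    · intro s hs
      have hs' : rr n (idx s).1 (E u) = E v := by
        have := congrArg E hs
        simpa using this
      have : (idx s).1 = t' := huniq (idx s).1 ⟨(idx s).2, hs'⟩
      have : idx s = ⟨t', ht'0⟩ := Subtype.ext this
      exact idx.injective (by rw [this, Equiv.apply_symm_apply])
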